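/- Let M ∈ ℝ^{n×n} be Hurwitz stable, let W ∈ ℝ^{n×n} be symmetric positive semidefinite, and let S ∈ ℝ^{n×n} be symmetric. Then the matrix-valued integral X = ∫₀^∞ exp(tM) W exp(tMᵀ) dt exists (the integrand is integrable entrywise on [0,∞)), X is symmetric positive semidefinite and is the unique solution of the continuous-time Lyapunov equation M X + X Mᵀ + W = 0, and ∫₀^∞ trace(S·exp(tM) W exp(tMᵀ)) dt = trace(S X). -/

import Mathlib

open Matrix MeasureTheory

noncomputable section

/-- A real square matrix is Hurwitz stable if every complex eigenvalue has negative real part. -/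
def IsHurwitz {n : ℕ} (M : Matrix (Fin n) (Fin n) ℝ) : Prop :=
  ∀ μ ∈ spectrum ℂ (M.map Complex.ofReal), μ.re < 0

attribute [local instance] Matrix.linftyOpNormedAddCommGroup Matrix.linftyOpNormedRing
  Matrix.linftyOpNormedAlgebra

def entryCLM {n : ℕ} (i j : Fin n) : Matrix (Fin n) (Fin n) ℝ →L[ℝ] ℝ :=
  LinearMap.toContinuousLinearMap
    { toFun := fun B => B i j, map_add' := fun _ _ => rfl, map_smul' := fun _ _ => rfl }

noncomputable def mvCLM {n : ℕ} (v : Fin n → ℂ) : Matrix (Fin n) (Fin n) ℂ →L[ℂ] (Fin n → ℂ) :=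
  LinearMap.toContinuousLinearMap
    { toFun := fun B => B *ᵥ v, map_add' := fun B C => Matrix.add_mulVec B C v,
      map_smul' := fun c B => Matrix.smul_mulVec c B v }

/-- core identity: exp of matrix applied to generalized eigenvector -/
theorem exp_mulVec_genEig {n : ℕ} (A : Matrix (Fin n) (Fin n) ℂ) (μ : ℂ) (v : Fin n → ℂ)
    (k : ℕ) (hk : ((A - μ • 1) ^ k) *ᵥ v = 0) (z : ℂ) :
    NormedSpace.exp (z • A) *ᵥ v
      = Complex.exp (z * μ) •
        ∑ i ∈ Finset.range k, (z ^ i * ((i.factorial : ℂ))⁻¹) • (((A - μ • 1) ^ i) *ᵥ v) := by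
  set N : Matrix (Fin n) (Fin n) ℂ := A - μ • 1 with hN
  have hsplit : z • A = algebraMap ℂ _ (z * μ) + z • N := by
    rw [Algebra.algebraMap_eq_smul_one, hN, smul_sub, mul_smul]
    abel
  have hcomm : Commute (algebraMap ℂ (Matrix (Fin n) (Fin n) ℂ) (z * μ)) (z • N) :=
    (Algebra.commutes _ _)
  have hexp : NormedSpace.exp (z • A)
      = algebraMap ℂ _ (Complex.exp (z * μ)) * NormedSpace.exp (z • N) := by
    rw [hsplit, Matrix.exp_add_of_commute _ _ hcomm, Complex.exp_eq_exp_ℂ]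
    congr 1
    exact (NormedSpace.algebraMap_exp_comm _).symm
  have hsum : Summable fun i : ℕ => ((i.factorial : ℂ))⁻¹ • (z • N) ^ i :=
    NormedSpace.expSeries_summable' (z • N)
  have htsum : NormedSpace.exp (z • N) *ᵥ v
      = ∑' i : ℕ, (z ^ i * ((i.factorial : ℂ))⁻¹) • (N ^ i *ᵥ v) := by
    rw [NormedSpace.exp_eq_tsum ℂ]
    have := (mvCLM v).map_tsum hsum
    refine this.trans (tsum_congr fun i => ?_)
    show (((i.factorial : ℂ))⁻¹ • (z • N) ^ i) *ᵥ v = _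
    rw [smul_pow, smul_smul, smul_mulVec, mul_comm]
  have hvanish : ∀ i : ℕ, i ∉ Finset.range k → (z ^ i * ((i.factorial : ℂ))⁻¹) • (N ^ i *ᵥ v) = 0 := by
    intro i hi
    rw [Finset.mem_range, not_lt] at hi
    have : N ^ i *ᵥ v = 0 := by
      have : N ^ i = N ^ (i - k) * N ^ k := by rw [← pow_add]; congr 1; omega
      rw [this, ← Matrix.mulVec_mulVec, hk, Matrix.mulVec_zero]
    rw [this, smul_zero]
  have : NormedSpace.exp (z • A) *ᵥ v
      = Complex.exp (z * μ) • (NormedSpace.exp (z • N) *ᵥ v) := by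
    rw [hexp, ← Matrix.mulVec_mulVec]
    rw [Algebra.algebraMap_eq_smul_one, Matrix.smul_mulVec, Matrix.one_mulVec]
  rw [this, htsum, tsum_eq_sum hvanish]

theorem pow_le_exp_aux (a t : ℝ) (k : ℕ) (ha : 0 < a) (ht : 0 ≤ t) :
    t ^ k ≤ (k.factorial : ℝ) * (2 / a) ^ k * Real.exp (a / 2 * t) := by
  have hx : (0:ℝ) ≤ a / 2 * t := by positivity
  have h1 : (a / 2 * t) ^ k / (k.factorial : ℝ) ≤ Real.exp (a / 2 * t) := by
    calc (a / 2 * t) ^ k / (k.factorial : ℝ)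
        ≤ ∑ i ∈ Finset.range (k+1), (a/2*t) ^ i / (i.factorial : ℝ) := by
          refine Finset.single_le_sum (f := fun i => (a/2*t)^i / (i.factorial : ℝ))
            (fun i _ => by positivity) (Finset.self_mem_range_succ k)
      _ ≤ Real.exp (a / 2 * t) := Real.sum_le_exp_of_nonneg hx _
  have hfac : (0:ℝ) < (k.factorial : ℝ) := by positivity
  have := (div_le_iff₀ hfac).mp h1
  calc t ^ k = (2/a)^k * (a/2*t)^k := by
        rw [mul_pow, ← mul_assoc, ← mul_pow]
        have : 2 / a * (a / 2) = 1 := by field_simp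
        rw [this, one_pow, one_mul]
    _ ≤ (2/a)^k * (Real.exp (a/2*t) * (k.factorial : ℝ)) := by
        refine mul_le_mul_of_nonneg_left this (by positivity)
    _ = (k.factorial : ℝ) * (2 / a) ^ k * Real.exp (a / 2 * t) := by ring

theorem exp_mulVec_decay {n : ℕ} (A : Matrix (Fin n) (Fin n) ℂ)
    (hA : ∀ μ ∈ spectrum ℂ A, μ.re < 0) (v : Fin n → ℂ) :
    ∃ C ε : ℝ, 0 < C ∧ 0 < ε ∧ ∀ t : ℝ, 0 ≤ t →
      ‖NormedSpace.exp ((t:ℂ) • A) *ᵥ v‖ ≤ C * Real.exp (-ε * t) := by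
  set f : Module.End ℂ (Fin n → ℂ) := Matrix.toLinAlgEquiv' A with hf
  have hv : v ∈ ⨆ μ : ℂ, f.maxGenEigenspace μ := by
    rw [Module.End.iSup_maxGenEigenspace_eq_top]; trivial
  refine Submodule.iSup_induction (motive := fun v => ∃ C ε : ℝ, 0 < C ∧ 0 < ε ∧ ∀ t : ℝ, 0 ≤ t →
      ‖NormedSpace.exp ((t:ℂ) • A) *ᵥ v‖ ≤ C * Real.exp (-ε * t))
    _ hv ?_ ?_ ?_
  · -- mem case
    intro μ x hx
    rcases eq_or_ne x 0 with rfl | hx0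
    · exact ⟨1, 1, one_pos, one_pos, fun t ht => by simp [Real.exp_nonneg]⟩
    obtain ⟨k, hk⟩ := (Module.End.mem_maxGenEigenspace f μ x).mp hx
    -- μ is in the spectrum
    have hkne : k ≠ 0 := by
      rintro rfl
      simp only [pow_zero, Module.End.one_apply] at hk
      exact hx0 hk
    have hμspec : μ ∈ spectrum ℂ A := by
      have hgen : f.HasGenEigenvalue μ k := by
        rw [Module.End.hasGenEigenvalue_iff]
        intro hbot
        have hxmem : x ∈ f.genEigenspace μ k := (Module.End.mem_genEigenspace_nat).mpr hk
        rw [hbot] at hxmem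
        exact hx0 (Submodule.mem_bot ℂ |>.mp hxmem)
      have := Module.End.hasEigenvalue_of_hasGenEigenvalue hgen
      have hmem := Module.End.hasEigenvalue_iff_mem_spectrum.mp this
      rwa [hf, AlgEquiv.spectrum_eq] at hmem
    have hre : μ.re < 0 := hA μ hμspec
    set a : ℝ := -μ.re with hadef
    have ha : 0 < a := by simp [hadef]; linarith
    -- matrix-level nilpotency
    have hkmat : ((A - μ • 1) ^ k) *ᵥ x = 0 := by
      have : (f - μ • 1) ^ k = Matrix.toLinAlgEquiv' ((A - μ • 1) ^ k) := by
        rw [map_pow, map_sub, _root_.map_smul, _root_.map_one]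
      rw [this] at hk
      exact hk
    set N : Matrix (Fin n) (Fin n) ℂ := A - μ • 1 with hNdef
    refine ⟨(∑ i ∈ Finset.range k, (2/a)^i * ‖(N ^ i) *ᵥ x‖) + 1, a/2, by positivity,
      by positivity, fun t ht => ?_⟩
    rw [exp_mulVec_genEig A μ x k hkmat]
    have habs : ‖Complex.exp ((t:ℂ) * μ)‖ = Real.exp (t * μ.re) := by
      rw [Complex.norm_exp]
      congr 1
      simp [Complex.mul_re]
    rw [norm_smul, habs]
    have hsumle : ‖∑ i ∈ Finset.range k, ((t:ℂ) ^ i * ((i.factorial : ℂ))⁻¹) • ((N ^ i) *ᵥ x)‖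
        ≤ ∑ i ∈ Finset.range k, t ^ i * ((i.factorial : ℝ))⁻¹ * ‖(N ^ i) *ᵥ x‖ := by
      refine (norm_sum_le _ _).trans (Finset.sum_le_sum fun i _ => ?_)
      rw [norm_smul]
      refine mul_le_mul_of_nonneg_right ?_ (norm_nonneg _)
      rw [norm_mul, norm_pow]
      have h1 : ‖(t:ℂ)‖ = t := by rw [Complex.norm_real]; exact abs_of_nonneg ht
      have h2 : ‖((i.factorial:ℂ))⁻¹‖ = ((i.factorial:ℝ))⁻¹ := by
        rw [norm_inv, Complex.norm_natCast]
      rw [h1, h2]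
    calc Real.exp (t * μ.re) * ‖∑ i ∈ Finset.range k, ((t:ℂ) ^ i * ((i.factorial : ℂ))⁻¹) • ((N ^ i) *ᵥ x)‖
        ≤ Real.exp (t * μ.re) * ∑ i ∈ Finset.range k, t ^ i * ((i.factorial : ℝ))⁻¹ * ‖(N ^ i) *ᵥ x‖ := by
          exact mul_le_mul_of_nonneg_left hsumle (Real.exp_nonneg _)
      _ ≤ Real.exp (t * μ.re) * ∑ i ∈ Finset.range k,
            ((i.factorial : ℝ) * (2/a)^i * Real.exp (a/2*t)) * ((i.factorial : ℝ))⁻¹ * ‖(N ^ i) *ᵥ x‖ := by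
          refine mul_le_mul_of_nonneg_left (Finset.sum_le_sum fun i _ => ?_) (Real.exp_nonneg _)
          have := pow_le_exp_aux a t i ha ht
          gcongr
      _ = (∑ i ∈ Finset.range k, (2/a)^i * ‖(N ^ i) *ᵥ x‖) * (Real.exp (t * μ.re) * Real.exp (a/2*t)) := by
          rw [Finset.sum_mul, Finset.mul_sum]
          congr 1
          ext i
          have hfac : ((i.factorial : ℝ)) ≠ 0 := by positivity
          field_simp
      _ ≤ ((∑ i ∈ Finset.range k, (2/a)^i * ‖(N ^ i) *ᵥ x‖) + 1) * Real.exp (-(a/2) * t) := by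
          rw [← Real.exp_add]
          have hexp : t * μ.re + a/2*t = -(a/2) * t := by
            rw [hadef]; ring
          rw [hexp]
          refine mul_le_mul_of_nonneg_right ?_ (Real.exp_nonneg _)
          have : (0:ℝ) ≤ ∑ i ∈ Finset.range k, (2/a)^i * ‖(N ^ i) *ᵥ x‖ :=
            Finset.sum_nonneg fun i _ => by positivity
          linarith
  · -- zero
    exact ⟨1, 1, one_pos, one_pos, by simp [Real.exp_nonneg]⟩
  · -- add
    rintro x y ⟨Cx, εx, hCx, hεx, hx⟩ ⟨Cy, εy, hCy, hεy, hy⟩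
    refine ⟨Cx + Cy, min εx εy, by positivity, lt_min hεx hεy, fun t ht => ?_⟩
    rw [Matrix.mulVec_add]
    refine (norm_add_le _ _).trans ?_
    have h1 : Real.exp (-εx * t) ≤ Real.exp (-(min εx εy) * t) := by
      apply Real.exp_le_exp.mpr; nlinarith [min_le_left εx εy]
    have h2 : Real.exp (-εy * t) ≤ Real.exp (-(min εx εy) * t) := by
      apply Real.exp_le_exp.mpr; nlinarith [min_le_right εx εy]
    calc ‖NormedSpace.exp ((t:ℂ) • A) *ᵥ x‖ + ‖NormedSpace.exp ((t:ℂ) • A) *ᵥ y‖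
        ≤ Cx * Real.exp (-εx * t) + Cy * Real.exp (-εy * t) := add_le_add (hx t ht) (hy t ht)
      _ ≤ Cx * Real.exp (-(min εx εy) * t) + Cy * Real.exp (-(min εx εy) * t) := by
          gcongr
      _ = (Cx + Cy) * Real.exp (-(min εx εy) * t) := by ring

theorem exp_map_ofReal {n : ℕ} (M : Matrix (Fin n) (Fin n) ℝ) (t : ℝ) :
    (NormedSpace.exp (t • M)).map Complex.ofReal
      = NormedSpace.exp ((t:ℂ) • M.map Complex.ofReal) := by
  have h1 : (NormedSpace.exp (t • M)).map Complex.ofReal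
      = NormedSpace.exp ((t • M).map Complex.ofReal) :=
    NormedSpace.map_exp (Complex.ofRealHom.mapMatrix (m := Fin n))
      (Continuous.matrix_map continuous_id Complex.continuous_ofReal) (t • M)
  have h2 : (t • M).map Complex.ofReal = (t:ℂ) • M.map Complex.ofReal := by
    ext i j
    simp [Matrix.map_apply, Complex.ofReal_mul, Complex.real_smul]
  rw [h1, h2]

theorem exp_entry_decay {n : ℕ} (M : Matrix (Fin n) (Fin n) ℝ) (hM : IsHurwitz M) :
    ∃ C ε : ℝ, 0 < C ∧ 0 < ε ∧ ∀ t : ℝ, 0 ≤ t → ∀ i j : Fin n,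
      |NormedSpace.exp (t • M) i j| ≤ C * Real.exp (-ε * t) := by
  rcases Nat.eq_zero_or_pos n with rfl | hn
  · exact ⟨1, 1, one_pos, one_pos, fun t ht i j => i.elim0⟩
  have hne : (Finset.univ : Finset (Fin n)).Nonempty := by
    rw [Finset.univ_nonempty_iff]
    exact Fin.pos_iff_nonempty.mp hn
  set A : Matrix (Fin n) (Fin n) ℂ := M.map Complex.ofReal with hA
  have hdj : ∀ j : Fin n, ∃ C ε : ℝ, 0 < C ∧ 0 < ε ∧ ∀ t : ℝ, 0 ≤ t →
      ‖NormedSpace.exp ((t:ℂ) • A) *ᵥ Pi.single j 1‖ ≤ C * Real.exp (-ε * t) :=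
    fun j => exp_mulVec_decay A hM (Pi.single j 1)
  choose Cf εf hCf hεf hbf using hdj
  refine ⟨∑ j, Cf j, Finset.univ.inf' hne εf, Finset.sum_pos (fun j _ => hCf j) hne,
    (Finset.lt_inf'_iff hne).mpr (fun j _ => hεf j), fun t ht i j => ?_⟩
  have hone : |NormedSpace.exp (t • M) i j| = ‖(NormedSpace.exp ((t:ℂ) • A)) i j‖ := by
    rw [← exp_map_ofReal]
    simp [Matrix.map_apply, Complex.norm_real]
  rw [hone]
  have hentry : (NormedSpace.exp ((t:ℂ) • A)) i j
      = (NormedSpace.exp ((t:ℂ) • A) *ᵥ Pi.single j 1) i := by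
    rw [Matrix.mulVec_single]
    simp
  rw [hentry]
  calc ‖(NormedSpace.exp ((t:ℂ) • A) *ᵥ Pi.single j 1) i‖
      ≤ ‖NormedSpace.exp ((t:ℂ) • A) *ᵥ Pi.single j 1‖ := norm_le_pi_norm _ i
    _ ≤ Cf j * Real.exp (-εf j * t) := hbf j t ht
    _ ≤ (∑ j', Cf j') * Real.exp (-(Finset.univ.inf' hne εf) * t) := by
        refine mul_le_mul (Finset.single_le_sum (fun j' _ => (hCf j').le) (Finset.mem_univ j))
          (Real.exp_le_exp.mpr ?_) (Real.exp_nonneg _) (Finset.sum_nonneg fun j' _ => (hCf j').le)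
        have := Finset.inf'_le εf (Finset.mem_univ j)
        nlinarith

/-- Integral representation of the solution of the continuous-time Lyapunov equation. -/
theorem stmt_9 {n : ℕ}
    (M W S : Matrix (Fin n) (Fin n) ℝ)
    (hM : IsHurwitz M) (hW : W.PosSemidef) (hS : S.IsHermitian) :
    ∃ X : Matrix (Fin n) (Fin n) ℝ,
      (∀ i j : Fin n,
        IntegrableOn
          (fun t : ℝ =>
            (NormedSpace.exp (t • M) * W * NormedSpace.exp (t • Mᵀ)) i j)
          (Set.Ici (0 : ℝ))) ∧
      (∀ i j : Fin n,
        X i j = ∫ t in Set.Ici (0 : ℝ),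
          (NormedSpace.exp (t • M) * W * NormedSpace.exp (t • Mᵀ)) i j) ∧
      X.PosSemidef ∧
      M * X + X * Mᵀ + W = 0 ∧
      (∀ X' : Matrix (Fin n) (Fin n) ℝ, M * X' + X' * Mᵀ + W = 0 → X' = X) ∧
      ∫ t in Set.Ici (0 : ℝ),
          Matrix.trace (S * (NormedSpace.exp (t • M) * W * NormedSpace.exp (t • Mᵀ)))
        = Matrix.trace (S * X) := by
  obtain ⟨C, ε, hC, hε, hdec⟩ := exp_entry_decay M hM
  set E : ℝ → Matrix (Fin n) (Fin n) ℝ := fun t => NormedSpace.exp (t • M) with hE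
  have hT : ∀ t : ℝ, NormedSpace.exp (t • Mᵀ) = (E t)ᵀ := fun t => by
    rw [hE, ← Matrix.transpose_smul, Matrix.exp_transpose]
  have hconjT : ∀ B : Matrix (Fin n) (Fin n) ℝ, Bᴴ = Bᵀ := fun B => by
    ext i j; simp [Matrix.conjTranspose_apply]
  -- general product function with arbitrary middle matrix
  set G : Matrix (Fin n) (Fin n) ℝ → ℝ → Matrix (Fin n) (Fin n) ℝ :=
    fun B t => NormedSpace.exp (t • M) * B * NormedSpace.exp (t • Mᵀ) with hG
  -- uniform entry bound for products
  have hbnd : ∀ (B : Matrix (Fin n) (Fin n) ℝ) (t : ℝ), 0 ≤ t → ∀ i j : Fin n,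
      |G B t i j| ≤ (C ^ 2 * ∑ k, ∑ l, |B k l|) * Real.exp (-(2 * ε) * t) := by
    intro B t ht i j
    have hentry : G B t i j = ∑ l, ∑ k, E t i k * B k l * E t j l := by
      rw [hG]
      simp only [hT, Matrix.mul_apply, Matrix.transpose_apply, Finset.sum_mul]
      rfl
    rw [hentry]
    calc |∑ l, ∑ k, E t i k * B k l * E t j l|
        ≤ ∑ l, ∑ k, |E t i k| * |B k l| * |E t j l| := by
          refine (Finset.abs_sum_le_sum_abs _ _).trans (Finset.sum_le_sum fun l _ => ?_)
          refine (Finset.abs_sum_le_sum_abs _ _).trans (Finset.sum_le_sum fun k _ => ?_)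
          rw [abs_mul, abs_mul]
      _ ≤ ∑ l, ∑ k, (C * Real.exp (-ε * t)) * |B k l| * (C * Real.exp (-ε * t)) := by
          refine Finset.sum_le_sum fun l _ => Finset.sum_le_sum fun k _ => ?_
          have h1 := hdec t ht i k
          have h2 := hdec t ht j l
          have hb : (0:ℝ) ≤ |B k l| := abs_nonneg _
          have he : (0:ℝ) ≤ C * Real.exp (-ε * t) := by positivity
          exact mul_le_mul (mul_le_mul h1 le_rfl hb (le_trans (abs_nonneg _) h1)) h2
            (abs_nonneg _) (mul_nonneg he hb)
      _ = ∑ l, ∑ k, (C ^ 2 * Real.exp (-(2 * ε) * t)) * |B k l| := by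
          refine Finset.sum_congr rfl fun l _ => Finset.sum_congr rfl fun k _ => ?_
          have h2exp : Real.exp (-(2*ε)*t) = Real.exp (-ε*t) * Real.exp (-ε*t) := by
            rw [← Real.exp_add]; ring_nf
          rw [h2exp]; ring
      _ = (C ^ 2 * ∑ k, ∑ l, |B k l|) * Real.exp (-(2 * ε) * t) := by
          rw [Finset.sum_comm]
          simp only [← Finset.mul_sum]
          ring
    -- continuity
  have hEc : Continuous E := by
    have h := NormedSpace.exp_continuous (𝔸 := Matrix (Fin n) (Fin n) ℝ)
    exact h.comp (continuous_id.smul continuous_const)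
  have hETc : Continuous fun t : ℝ => NormedSpace.exp (t • Mᵀ) := by
    have h := NormedSpace.exp_continuous (𝔸 := Matrix (Fin n) (Fin n) ℝ)
    exact h.comp (continuous_id.smul continuous_const)
  have hGc : ∀ B, Continuous (G B) := fun B => (hEc.mul continuous_const).mul hETc
  have hGec : ∀ B (i j : Fin n), Continuous fun t => G B t i j := fun B i j =>
    (entryCLM i j).continuous.comp (hGc B)
  -- integrability of entries
  have hgint : IntegrableOn (fun t => Real.exp (-(2 * ε) * t)) (Set.Ici (0:ℝ)) :=
    (Iff.mpr integrableOn_Ici_iff_integrableOn_Ioi) (exp_neg_integrableOn_Ioi 0 (by linarith))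
  have hGint : ∀ B (i j : Fin n), IntegrableOn (fun t => G B t i j) (Set.Ici (0:ℝ)) := by
    intro B i j
    refine Integrable.mono' (hgint.const_mul (C ^ 2 * ∑ k, ∑ l, |B k l|))
      ((hGec B i j).aestronglyMeasurable.restrict) ?_
    refine (ae_restrict_iff' measurableSet_Ici).mpr (ae_of_all _ fun t ht => ?_)
    simpa [Real.norm_eq_abs] using hbnd B t ht i j
  have hFint := hGint W
  have hFint' : ∀ i j, IntegrableOn (fun t => G W t i j) (Set.Ioi (0:ℝ)) := fun i j =>
    (Iff.mp integrableOn_Ici_iff_integrableOn_Ioi) (hFint i j)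
  -- the candidate solution
  set X : Matrix (Fin n) (Fin n) ℝ :=
    Matrix.of fun i j => ∫ t in Set.Ici (0:ℝ), G W t i j with hX
  have hXapp : ∀ i j, X i j = ∫ t in Set.Ici (0:ℝ), G W t i j := fun i j => rfl
  -- entry limits at infinity
  have hGlim : ∀ B (i j : Fin n), Filter.Tendsto (fun t => G B t i j) Filter.atTop (nhds 0) := by
    intro B i j
    have hg0 : Filter.Tendsto (fun t : ℝ => (C ^ 2 * ∑ k, ∑ l, |B k l|) * Real.exp (-(2 * ε) * t))
        Filter.atTop (nhds 0) := by
      rw [show (0:ℝ) = (C ^ 2 * ∑ k, ∑ l, |B k l|) * 0 by ring]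
      refine Filter.Tendsto.const_mul _ ?_
      refine Real.tendsto_exp_atBot.comp ?_
      exact Filter.Tendsto.const_mul_atTop_of_neg (by linarith) Filter.tendsto_id
    refine squeeze_zero_norm' ?_ hg0
    filter_upwards [Filter.eventually_ge_atTop (0:ℝ)] with t ht
    simpa [Real.norm_eq_abs] using hbnd B t ht i j
  -- derivative of G B
  have hGderiv : ∀ B (t : ℝ), HasDerivAt (G B) (M * G B t + G B t * Mᵀ) t := by
    intro B t
    have h1 : HasDerivAt (fun u : ℝ => NormedSpace.exp (u • M) * B)
        (M * NormedSpace.exp (t • M) * B) t :=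
      (hasDerivAt_exp_smul_const' (𝕂 := ℝ) M t).mul_const B
    have h2 : HasDerivAt (fun u : ℝ => NormedSpace.exp (u • Mᵀ))
        (Mᵀ * NormedSpace.exp (t • Mᵀ)) t := hasDerivAt_exp_smul_const' (𝕂 := ℝ) Mᵀ t
    have h3 := h1.mul h2
    convert h3 using 1
    · exact rfl
    · exact rfl
    · exact rfl
    · exact rfl
    have hcomm : Mᵀ * NormedSpace.exp (t • Mᵀ) = NormedSpace.exp (t • Mᵀ) * Mᵀ :=
      (((Commute.refl Mᵀ).smul_right t).exp_right).eq
    rw [hG]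
    simp only [mul_assoc]
    rw [hcomm]
  have hGederiv : ∀ B (i j : Fin n) (t : ℝ),
      HasDerivAt (fun u => G B u i j) ((M * G B t + G B t * Mᵀ) i j) t := fun B i j t =>
    ((entryCLM i j).hasFDerivAt.comp_hasDerivAt t (hGderiv B t) :)
  have hG0 : ∀ B, G B 0 = B := by
    intro B
    rw [hG]
    simp only [zero_smul, NormedSpace.exp_zero, one_mul, mul_one]
  -- Lyapunov equation
  have hDc : ∀ (i j : Fin n), Continuous fun t => (M * G W t + G W t * Mᵀ) i j := by
    intro i j
    have : Continuous fun t => M * G W t + G W t * Mᵀ :=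
      (continuous_const.mul (hGc W)).add ((hGc W).mul continuous_const)
    exact (entryCLM i j).continuous.comp this
  have hDint : ∀ (i j : Fin n),
      IntegrableOn (fun t => (M * G W t + G W t * Mᵀ) i j) (Set.Ioi (0:ℝ)) := by
    intro i j
    have hfun : (fun t => (M * G W t + G W t * Mᵀ) i j)
        = fun t => (∑ k, M i k * G W t k j) + ∑ k, G W t i k * Mᵀ k j := by
      funext t; simp [Matrix.add_apply, Matrix.mul_apply]
    rw [hfun]
    exact (integrable_finset_sum _ fun k _ => (hFint' k j).const_mul _).add
      (integrable_finset_sum _ fun k _ => (hFint' i k).mul_const _)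
  have hlyap : ∀ i j, (∫ t in Set.Ioi (0:ℝ), (M * G W t + G W t * Mᵀ) i j) = - W i j := by
    intro i j
    have hftc : ∀ T : ℝ, (∫ u in (0:ℝ)..T, (M * G W u + G W u * Mᵀ) i j)
        = G W T i j - G W 0 i j := by
      intro T
      exact intervalIntegral.integral_eq_sub_of_hasDerivAt
        (fun u _ => hGederiv W i j u) ((hDc i j).intervalIntegrable 0 T)
    have h1 : Filter.Tendsto (fun T : ℝ => ∫ u in (0:ℝ)..T, (M * G W u + G W u * Mᵀ) i j)
        Filter.atTop (nhds (∫ t in Set.Ioi (0:ℝ), (M * G W t + G W t * Mᵀ) i j)) :=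
      intervalIntegral_tendsto_integral_Ioi 0 (hDint i j) Filter.tendsto_id
    have h2 : Filter.Tendsto (fun T : ℝ => G W T i j - G W 0 i j)
        Filter.atTop (nhds (0 - G W 0 i j)) := (hGlim W i j).sub_const _
    rw [funext hftc] at h1
    have h3 := tendsto_nhds_unique h1 h2
    rw [h3, hG0, zero_sub]
  have hMX : ∀ i j, (M * X + X * Mᵀ) i j = ∫ t in Set.Ioi (0:ℝ), (M * G W t + G W t * Mᵀ) i j := by
    intro i j
    have hXioi : ∀ i j, X i j = ∫ t in Set.Ioi (0:ℝ), G W t i j := fun i j => by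
      rw [hXapp, integral_Ici_eq_integral_Ioi]
    have hrhs : (fun t => (M * G W t + G W t * Mᵀ) i j)
        = fun t => (∑ k, M i k * G W t k j) + ∑ k, G W t i k * Mᵀ k j := by
      funext t; simp [Matrix.add_apply, Matrix.mul_apply]
    rw [hrhs]
    rw [integral_add (integrable_finset_sum _ fun k _ => (hFint' k j).const_mul _)
      (integrable_finset_sum _ fun k _ => (hFint' i k).mul_const _)]
    rw [integral_finset_sum _ fun k _ => (hFint' k j).const_mul _,
      integral_finset_sum _ fun k _ => (hFint' i k).mul_const _]
    simp only [Matrix.add_apply, Matrix.mul_apply, hXioi]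
    congr 1
    · exact Finset.sum_congr rfl fun k _ => (integral_const_mul (M i k) fun t => G W t k j).symm
    · exact Finset.sum_congr rfl fun k _ =>
        (integral_mul_const (Mᵀ k j) fun t => G W t i k).symm
  have heq : M * X + X * Mᵀ + W = 0 := by
    ext i j
    have := (hMX i j).trans (hlyap i j)
    simp only [Matrix.add_apply, Matrix.zero_apply]
    simp only [Matrix.add_apply] at this
    linarith
  -- symmetry of entries of G W
  have hGsymm : ∀ t (i j : Fin n), G W t j i = G W t i j := by
    intro t i j
    have hps : (G W t).PosSemidef := by
      have hGWt : G W t = E t * W * (E t)ᴴ := by rw [hconjT, ← hT]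
      rw [hGWt]
      exact hW.mul_mul_conjTranspose_same (E t)
    have := hps.1
    have h2 := congr_fun (congr_fun this i) j
    simpa [Matrix.conjTranspose_apply] using h2
  have hXherm : X.IsHermitian := by
    ext i j
    simp only [Matrix.conjTranspose_apply, star_trivial]
    rw [hXapp, hXapp]
    exact integral_congr_ae (ae_of_all _ fun t => hGsymm t i j)
  -- positive semidefiniteness
  have hXpsd : X.PosSemidef := by
    refine Matrix.PosSemidef.of_dotProduct_mulVec_nonneg hXherm fun x => ?_
    have hquad : dotProduct (star x) (X *ᵥ x)
        = ∫ t in Set.Ici (0:ℝ), dotProduct (star x) (G W t *ᵥ x) := by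
      have hint1 : ∀ i j : Fin n,
          IntegrableOn (fun t => x i * (G W t i j * x j)) (Set.Ici (0:ℝ)) := fun i j =>
        ((hFint i j).mul_const (x j)).const_mul (x i)
      calc dotProduct (star x) (X *ᵥ x) = ∑ i, ∑ j, x i * (X i j * x j) := by
            simp [dotProduct, Matrix.mulVec, Finset.mul_sum]
        _ = ∑ i, ∑ j, ∫ t in Set.Ici (0:ℝ), x i * (G W t i j * x j) := by
            refine Finset.sum_congr rfl fun i _ => Finset.sum_congr rfl fun j _ => ?_
            rw [hXapp i j, ← integral_mul_const (x j) fun t => G W t i j,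
              ← integral_const_mul (x i) fun t => G W t i j * x j]
        _ = ∫ t in Set.Ici (0:ℝ), ∑ i, ∑ j, x i * (G W t i j * x j) := by
            rw [integral_finset_sum _ fun i _ => integrable_finset_sum _ fun j _ => hint1 i j]
            exact Finset.sum_congr rfl fun i _ =>
              (integral_finset_sum _ fun j _ => hint1 i j).symm
        _ = ∫ t in Set.Ici (0:ℝ), dotProduct (star x) (G W t *ᵥ x) := by
            refine integral_congr_ae (ae_of_all _ fun t => ?_)
            simp [dotProduct, Matrix.mulVec, Finset.mul_sum]
    rw [hquad]
    refine setIntegral_nonneg measurableSet_Ici fun t ht => ?_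
    have hps : (G W t).PosSemidef := by
      have hGWt : G W t = E t * W * (E t)ᴴ := by rw [hconjT, ← hT]
      rw [hGWt]
      exact hW.mul_mul_conjTranspose_same (E t)
    exact hps.dotProduct_mulVec_nonneg x
  -- uniqueness
  have huniq : ∀ X' : Matrix (Fin n) (Fin n) ℝ, M * X' + X' * Mᵀ + W = 0 → X' = X := by
    intro X' hX'
    set D : Matrix (Fin n) (Fin n) ℝ := X' - X with hD
    have hD0 : M * D + D * Mᵀ = 0 := by
      have : M * D + D * Mᵀ = (M * X' + X' * Mᵀ + W) - (M * X + X * Mᵀ + W) := by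
        rw [hD]; noncomm_ring
      rw [this, hX', heq, sub_zero]
    have hgz : ∀ t : ℝ, M * G D t + G D t * Mᵀ = 0 := by
      intro t
      have hcM : M * NormedSpace.exp (t • M) = NormedSpace.exp (t • M) * M :=
        (((Commute.refl M).smul_right t).exp_right).eq
      have hcMT : NormedSpace.exp (t • Mᵀ) * Mᵀ = Mᵀ * NormedSpace.exp (t • Mᵀ) :=
        (((Commute.refl Mᵀ).smul_right t).exp_right).eq.symm
      have : M * G D t + G D t * Mᵀ
          = NormedSpace.exp (t • M) * (M * D + D * Mᵀ) * NormedSpace.exp (t • Mᵀ) := by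
        rw [hG]
        rw [mul_add, add_mul]  -- distribute
        rw [show M * (NormedSpace.exp (t • M) * D * NormedSpace.exp (t • Mᵀ))
            = M * NormedSpace.exp (t • M) * D * NormedSpace.exp (t • Mᵀ) by
          simp only [mul_assoc]]
        rw [hcM]
        simp only [mul_assoc, mul_add, add_mul]
        rw [hcMT]
      rw [this, hD0, mul_zero, zero_mul]
    have hconst : ∀ (i j : Fin n) (T : ℝ), G D T i j = D i j := by
      intro i j T
      have hdiff : ∀ t : ℝ, HasDerivAt (fun u => G D u i j) 0 t := by
        intro t
        have := hGederiv D i j t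
        rwa [hgz t, Matrix.zero_apply] at this
      have := is_const_of_deriv_eq_zero (fun t => (hdiff t).differentiableAt)
        (fun t => (hdiff t).deriv) T 0
      rw [this, hG0]
    have hDzero : D = 0 := by
      ext i j
      have h1 : Filter.Tendsto (fun T => G D T i j) Filter.atTop (nhds 0) := hGlim D i j
      have h2 : Filter.Tendsto (fun T => G D T i j) Filter.atTop (nhds (D i j)) := by
        simp only [hconst i j]
        exact tendsto_const_nhds
      have := tendsto_nhds_unique h2 h1
      simpa using this
    have := sub_eq_zero.mp (hD ▸ hDzero)
    exact this
  -- trace identity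
  have htrace : (∫ t in Set.Ici (0:ℝ), Matrix.trace (S * G W t)) = Matrix.trace (S * X) := by
    have hfun : (fun t => Matrix.trace (S * G W t))
        = fun t => ∑ i, ∑ k, S i k * G W t k i := by
      funext t
      simp [Matrix.trace, Matrix.diag, Matrix.mul_apply]
    rw [hfun]
    erw [integral_finset_sum _ fun i _ =>
      integrable_finset_sum _ fun k _ => (hFint k i).const_mul _]
    have : Matrix.trace (S * X) = ∑ i, ∑ k, S i k * X k i := by
      simp [Matrix.trace, Matrix.diag, Matrix.mul_apply]
    rw [this]
    refine Finset.sum_congr rfl fun i _ => ?_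
    rw [integral_finset_sum _ fun k _ => (hFint k i).const_mul _]
    refine Finset.sum_congr rfl fun k _ => ?_
    rw [hXapp k i]
    exact integral_const_mul (S i k) fun t => G W t k i
  exact ⟨X, hFint, hXapp, hXpsd, heq, huniq, htrace⟩
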